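/- Let M' ⊆ M, {𝒰ₓᵒ}, {f_u} witness the SAF-condition for (M, 𝒰) with rank 𝒰 = m ≥ 2, and let 𝒱 be a vector bundle of nonpositive type on M. Then every vector bundle homomorphism φ : ⊗^k 𝒰 → 𝒱 ⊗ Sym^ℓ 𝒰 with 0 ≤ ℓ < k is zero. -/

import Mathlib

noncomputable section

open Module

/-- Data witnessing that the pullback of the rank-`m` bundle `𝒰` to a rational
curve through `(x, u)` splits as `ℒ ⊕ 𝒪^{m-1}` with `ℒ` ample (of degree
`a ≥ 1`) whose fiber at the base point is `ℂu`, and that the pullback of the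
rank-`d` bundle `𝒱` splits as a sum of line bundles `𝒪(bᵢ)` with `bᵢ ≤ 0`
(nonpositive type).  The curve `ℙ¹ → M` is encoded by its restrictions `f`
(the chart around the base point `o = 0`) and `g` (the chart around `∞`),
glued by `t ↦ t⁻¹`; the pulled-back bundles are encoded by trivializations
over the two charts whose transition matrices are the diagonal matrices
`diag(t^{-a},1,…,1)` resp. `diag(t^{-b₁},…,t^{-b_d})`. -/
structure SAFCurve (M : Type*) (𝒰 𝒱 : M → Type*)
    [∀ x, AddCommGroup (𝒰 x)] [∀ x, Module ℂ (𝒰 x)]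
    [∀ x, AddCommGroup (𝒱 x)] [∀ x, Module ℂ (𝒱 x)]
    (m d : ℕ) (hm : 0 < m) (x : M) (u : 𝒰 x) where
  f : ℂ → M
  g : ℂ → M
  compat : ∀ t : ℂ, t ≠ 0 → f t = g t⁻¹
  basept : f 0 = x
  a : ℕ
  ample : 1 ≤ a
  τ : ∀ t : ℂ, (Fin m → ℂ) ≃ₗ[ℂ] 𝒰 (f t)
  τ' : ∀ t : ℂ, (Fin m → ℂ) ≃ₗ[ℂ] 𝒰 (g t)
  trans : ∀ (t : ℂ) (ht : t ≠ 0) (c : Fin m → ℂ),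
    τ t c = cast (congrArg 𝒰 (compat t ht)).symm
      (τ' t⁻¹ (fun i => (if (i : ℕ) = 0 then (t : ℂ) ^ (-(a : ℤ)) else 1) * c i))
  fiber : ∃ cc : ℂ, cc ≠ 0 ∧ τ 0 (Pi.single ⟨0, hm⟩ 1) = cc • (cast (congrArg 𝒰 basept).symm u)
  b : Fin d → ℤ
  nonpos : ∀ i, b i ≤ 0
  ρ : ∀ t : ℂ, (Fin d → ℂ) ≃ₗ[ℂ] 𝒱 (f t)
  ρ' : ∀ t : ℂ, (Fin d → ℂ) ≃ₗ[ℂ] 𝒱 (g t)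
  transV : ∀ (t : ℂ) (ht : t ≠ 0) (c : Fin d → ℂ),
    ρ t c = cast (congrArg 𝒱 (compat t ht)).symm
      (ρ' t⁻¹ (fun i => (t : ℂ) ^ (-(b i)) * c i))

variable {M : Type*} {𝒰 𝒱 : M → Type*}
  [∀ x, AddCommGroup (𝒰 x)] [∀ x, Module ℂ (𝒰 x)]
  [∀ x, AddCommGroup (𝒱 x)] [∀ x, Module ℂ (𝒱 x)]
  {m d k ℓ : ℕ}

/-- Holomorphy of the vector bundle homomorphism
`φ : ⊗^k 𝒰 → 𝒱 ⊗ Sym^ℓ 𝒰` along a curve: in the given trivializations over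
both charts, all matrix entries of `φ` are holomorphic functions of the curve
parameter.  Here `φ` is encoded fiberwise as a `k`-multilinear map on `𝒰ₓ`
with values in `ℓ`-multilinear maps on `𝒰ₓ*` (valued in `𝒱ₓ`), the latter
being the canonical model of `𝒱ₓ ⊗ Sym^ℓ 𝒰ₓ` for symmetric values. -/
def HolAlong (hm : 0 < m) {x : M} {u : 𝒰 x}
    (φ : ∀ y : M, MultilinearMap ℂ (fun _ : Fin k => 𝒰 y)
      (MultilinearMap ℂ (fun _ : Fin ℓ => Module.Dual ℂ (𝒰 y)) (𝒱 y)))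
    (C : SAFCurve M 𝒰 𝒱 m d hm x u) : Prop :=
  (∀ (idx : Fin k → Fin m) (jdx : Fin ℓ → Fin m) (i : Fin d),
    Differentiable ℂ (fun t : ℂ =>
      (C.ρ t).symm (φ (C.f t)
        (fun j => C.τ t (Pi.single (idx j) 1))
        (fun r => ((LinearMap.proj (jdx r) : ((Fin m → ℂ) →ₗ[ℂ] ℂ)).comp
          ((C.τ t).symm : 𝒰 (C.f t) ≃ₗ[ℂ] (Fin m → ℂ)).toLinearMap))) i)) ∧
  (∀ (idx : Fin k → Fin m) (jdx : Fin ℓ → Fin m) (i : Fin d),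
    Differentiable ℂ (fun t : ℂ =>
      (C.ρ' t).symm (φ (C.g t)
        (fun j => C.τ' t (Pi.single (idx j) 1))
        (fun r => ((LinearMap.proj (jdx r) : ((Fin m → ℂ) →ₗ[ℂ] ℂ)).comp
          ((C.τ' t).symm : 𝒰 (C.g t) ≃ₗ[ℂ] (Fin m → ℂ)).toLinearMap))) i))

open Bornology Set Finset in
private lemma entire_zero_of_rel (F G : ℂ → ℂ) (hF : Differentiable ℂ F) (hG : Differentiable ℂ G)
    (e : ℤ) (he : e < 0) (hrel : ∀ t : ℂ, t ≠ 0 → F t = t ^ e * G t⁻¹) : ∀ t, F t = 0 := by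
  obtain ⟨C1, hC1⟩ := (isCompact_closedBall (0:ℂ) 1).exists_bound_of_continuousOn
    hF.continuous.continuousOn
  obtain ⟨C2, hC2⟩ := (isCompact_closedBall (0:ℂ) 1).exists_bound_of_continuousOn
    hG.continuous.continuousOn
  have hbdd : IsBounded (range F) := by
    rw [isBounded_iff_forall_norm_le]
    refine ⟨max C1 C2, ?_⟩
    rintro _ ⟨t, rfl⟩
    rcases le_or_gt ‖t‖ 1 with h | h
    · exact le_max_of_le_left (hC1 t (by simpa [Metric.mem_closedBall] using h))
    · have ht : t ≠ 0 := by
        intro h0; rw [h0] at h; simp at h; linarith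
      rw [hrel t ht]
      have h1 : ‖t ^ e‖ ≤ 1 := by
        rw [norm_zpow]
        exact zpow_le_one_of_nonpos₀ (le_of_lt h) he.le
      have h2 : ‖G t⁻¹‖ ≤ C2 := by
        apply hC2
        simp only [Metric.mem_closedBall, dist_zero_right, norm_inv]
        exact inv_le_one_of_one_le₀ h.le
      calc ‖t ^ e * G t⁻¹‖ = ‖t ^ e‖ * ‖G t⁻¹‖ := norm_mul _ _
        _ ≤ 1 * C2 := by
            apply mul_le_mul h1 h2 (norm_nonneg _) zero_le_one
        _ ≤ max C1 C2 := by simpa using le_max_right C1 C2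
  have hconst : ∀ t, F t = F 0 := fun t => hF.apply_eq_apply_of_bounded hbdd t 0
  have hc : F 0 = 0 := by
    set c := F 0 with hc
    set n : ℕ := (-e).toNat with hn
    have hn1 : 1 ≤ n := by omega
    have hH : ∀ s : ℂ, s ≠ 0 → G s * s ^ n = c := by
      intro s hs
      have := hrel s⁻¹ (inv_ne_zero hs)
      rw [hconst s⁻¹] at this
      rw [inv_inv] at this
      have hz : (s⁻¹ : ℂ) ^ e = s ^ n := by
        rw [inv_zpow', ← zpow_natCast s n]
        congr 1
        omega
      rw [hz] at this
      linear_combination -this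
    have hlim : Filter.Tendsto (fun s : ℂ => G s * s ^ n) (nhdsWithin 0 {0}ᶜ) (nhds c) := by
      apply Filter.Tendsto.congr' ?_ tendsto_const_nhds
      filter_upwards [self_mem_nhdsWithin] with s hs
      exact (hH s hs).symm
    have hlim2 : Filter.Tendsto (fun s : ℂ => G s * s ^ n) (nhdsWithin 0 {0}ᶜ)
        (nhds (G 0 * 0 ^ n)) := by
      apply Filter.Tendsto.mono_left ?_ nhdsWithin_le_nhds
      exact (hG.continuous.tendsto 0).mul ((continuous_pow n).tendsto 0)
    have := tendsto_nhds_unique hlim hlim2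
    rw [this, zero_pow (by omega), mul_zero]
  intro t; rw [hconst t, hc]

private lemma rel_aux {y z : M} (h : y = z)
    (φy : MultilinearMap ℂ (fun _ : Fin k => 𝒰 y)
      (MultilinearMap ℂ (fun _ : Fin ℓ => Module.Dual ℂ (𝒰 y)) (𝒱 y)))
    (φz : MultilinearMap ℂ (fun _ : Fin k => 𝒰 z)
      (MultilinearMap ℂ (fun _ : Fin ℓ => Module.Dual ℂ (𝒰 z)) (𝒱 z)))
    (hφ : HEq φy φz)
    (τy : (Fin m → ℂ) ≃ₗ[ℂ] 𝒰 y) (τz : (Fin m → ℂ) ≃ₗ[ℂ] 𝒰 z)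
    (ρy : (Fin d → ℂ) ≃ₗ[ℂ] 𝒱 y) (ρz : (Fin d → ℂ) ≃ₗ[ℂ] 𝒱 z)
    (t : ℂ) (ht : t ≠ 0) (a : ℕ) (b : Fin d → ℤ)
    (hτ : ∀ c, τy c = cast (congrArg 𝒰 h).symm
      (τz fun i => (if (i : ℕ) = 0 then t ^ (-(a : ℤ)) else 1) * c i))
    (hρ : ∀ c, ρy c = cast (congrArg 𝒱 h).symm (ρz fun i => t ^ (-(b i)) * c i))
    (idx : Fin k → Fin m) (jdx : Fin ℓ → Fin m) (i : Fin d) :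
    (ρy.symm (φy (fun j => τy (Pi.single (idx j) 1))
      (fun r => (LinearMap.proj (jdx r)).comp τy.symm.toLinearMap))) i
    = t ^ (b i + (a : ℤ) * ((Finset.univ.filter fun r => ((jdx r : ℕ) = 0)).card : ℤ)
        - (a : ℤ) * ((Finset.univ.filter fun j => ((idx j : ℕ) = 0)).card : ℤ))
      * (ρz.symm (φz (fun j => τz (Pi.single (idx j) 1))
          (fun r => (LinearMap.proj (jdx r)).comp τz.symm.toLinearMap))) i := by
  subst h
  replace hφ : φy = φz := eq_of_heq hφ
  subst hφ
  simp only [cast_eq] at hτ hρ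
  set lam : Fin m → ℂ := fun p => if (p : ℕ) = 0 then t ^ (-(a : ℤ)) else 1 with hlam
  set mu : Fin m → ℂ := fun p => if (p : ℕ) = 0 then t ^ ((a : ℤ)) else 1 with hmu
  have hlammu : ∀ p, mu p * lam p = 1 := by
    intro p
    simp only [hlam, hmu]
    by_cases hp : (p : ℕ) = 0
    · simp only [hp, if_true]
      rw [← zpow_add₀ ht]
      simp
    · simp [hp]
  have hτ1 : ∀ p : Fin m, τy (Pi.single p 1) = lam p • τz (Pi.single p 1) := by
    intro p
    rw [hτ, ← map_smul]
    congr 1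
    funext q
    simp only [Pi.smul_apply, smul_eq_mul, Pi.single_apply]
    by_cases hq : q = p
    · subst hq; simp [hlam]
    · simp [hq]
  have hτ2 : ∀ (w : 𝒰 y) (p : Fin m), τy.symm w p = mu p * τz.symm w p := by
    intro w p
    have h1 : w = τz fun i => lam i * τy.symm w i := by
      conv_lhs => rw [← τy.apply_symm_apply w]
      rw [hτ]
    have h2 : τz.symm w = fun i => lam i * τy.symm w i := by
      conv_lhs => rw [h1]
      simp
    rw [h2]
    simp only []
    rw [← mul_assoc, hlammu, one_mul]
  have hρ2 : ∀ (w : 𝒱 y) (i : Fin d), ρy.symm w i = t ^ (b i) * ρz.symm w i := by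
    intro w i
    have h1 : w = ρz fun i => t ^ (-(b i)) * ρy.symm w i := by
      conv_lhs => rw [← ρy.apply_symm_apply w]
      rw [hρ]
    have h2 : ρz.symm w = fun i => t ^ (-(b i)) * ρy.symm w i := by
      conv_lhs => rw [h1]
      simp
    rw [h2]
    simp only []
    rw [← mul_assoc, ← zpow_add₀ ht]
    simp
  have e2 : ∀ r, (LinearMap.proj (jdx r) : (Fin m → ℂ) →ₗ[ℂ] ℂ).comp τy.symm.toLinearMap
      = mu (jdx r) • (LinearMap.proj (jdx r) : (Fin m → ℂ) →ₗ[ℂ] ℂ).comp τz.symm.toLinearMap := by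
    intro r
    apply LinearMap.ext
    intro w
    simpa using hτ2 w (jdx r)
  have hmain : φy (fun j => τy (Pi.single (idx j) 1))
        (fun r => (LinearMap.proj (jdx r)).comp τy.symm.toLinearMap)
      = ((∏ j, lam (idx j)) * (∏ r, mu (jdx r))) •
        φy (fun j => τz (Pi.single (idx j) 1))
          (fun r => (LinearMap.proj (jdx r)).comp τz.symm.toLinearMap) := by
    rw [show (fun j => τy (Pi.single (idx j) (1:ℂ))) =
        fun j => lam (idx j) • τz (Pi.single (idx j) 1) from funext fun j => hτ1 _]
    rw [show (fun r => (LinearMap.proj (jdx r) : (Fin m → ℂ) →ₗ[ℂ] ℂ).comp τy.symm.toLinearMap) =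
        fun r => mu (jdx r) • (LinearMap.proj (jdx r) : (Fin m → ℂ) →ₗ[ℂ] ℂ).comp
          τz.symm.toLinearMap from funext fun r => e2 r]
    rw [MultilinearMap.map_smul_univ, MultilinearMap.map_smul_univ, MultilinearMap.smul_apply,
      smul_smul, mul_comm]
  rw [hmain, map_smul, Pi.smul_apply, smul_eq_mul, hρ2]
  have hprodlam : (∏ j, lam (idx j))
      = t ^ (-((a : ℤ) * ((Finset.univ.filter fun j => ((idx j : ℕ) = 0)).card : ℤ))) := by
    simp only [hlam]
    rw [Finset.prod_ite, Finset.prod_const, Finset.prod_const_one, mul_one]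
    rw [← zpow_natCast (t ^ (-(a:ℤ))), ← zpow_mul]
    congr 1
    ring
  have hprodmu : (∏ r, mu (jdx r))
      = t ^ ((a : ℤ) * ((Finset.univ.filter fun r => ((jdx r : ℕ) = 0)).card : ℤ)) := by
    simp only [hmu]
    rw [Finset.prod_ite, Finset.prod_const, Finset.prod_const_one, mul_one]
    rw [← zpow_natCast (t ^ ((a:ℤ))), ← zpow_mul]
  rw [hprodlam, hprodmu, ← zpow_add₀ ht, ← mul_assoc, ← zpow_add₀ ht]
  congr 1
  ring

private lemma stepQ {hm : 0 < m} {x : M} {u : 𝒰 x}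
    (φ : ∀ y : M, MultilinearMap ℂ (fun _ : Fin k => 𝒰 y)
      (MultilinearMap ℂ (fun _ : Fin ℓ => Module.Dual ℂ (𝒰 y)) (𝒱 y)))
    (C : SAFCurve M 𝒰 𝒱 m d hm x u) (hH : HolAlong hm φ C)
    (idx : Fin k → Fin m) (jdx : Fin ℓ → Fin m)
    (hcond : (Finset.univ.filter fun r => ((jdx r : ℕ) = 0)).card
      < (Finset.univ.filter fun j => ((idx j : ℕ) = 0)).card) :
    φ (C.f 0) (fun j => C.τ 0 (Pi.single (idx j) 1))
      (fun r => (LinearMap.proj (jdx r)).comp ((C.τ 0).symm).toLinearMap) = 0 := by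
  have hFzero : ∀ i : Fin d, ∀ t : ℂ,
      ((C.ρ t).symm (φ (C.f t) (fun j => C.τ t (Pi.single (idx j) 1))
        (fun r => (LinearMap.proj (jdx r)).comp ((C.τ t).symm).toLinearMap))) i = 0 := by
    intro i
    have he : C.b i + (C.a : ℤ) * ((Finset.univ.filter fun r => ((jdx r : ℕ) = 0)).card : ℤ)
        - (C.a : ℤ) * ((Finset.univ.filter fun j => ((idx j : ℕ) = 0)).card : ℤ) < 0 := by
      have h1 : (C.a : ℤ) * (((Finset.univ.filter fun r => ((jdx r : ℕ) = 0)).card : ℤ) + 1)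
          ≤ (C.a : ℤ) * ((Finset.univ.filter fun j => ((idx j : ℕ) = 0)).card : ℤ) := by
        apply mul_le_mul_of_nonneg_left _ (by positivity)
        exact_mod_cast hcond
      have h2 : (1 : ℤ) ≤ (C.a : ℤ) := by exact_mod_cast C.ample
      have h3 := C.nonpos i
      nlinarith
    refine entire_zero_of_rel _
      (fun t => ((C.ρ' t).symm (φ (C.g t) (fun j => C.τ' t (Pi.single (idx j) 1))
        (fun r => (LinearMap.proj (jdx r)).comp ((C.τ' t).symm).toLinearMap))) i)
      (hH.1 idx jdx i) (hH.2 idx jdx i) _ he ?_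
    intro t ht
    exact rel_aux (C.compat t ht) (φ (C.f t)) (φ (C.g t⁻¹))
      (by rw [C.compat t ht]) (C.τ t) (C.τ' t⁻¹) (C.ρ t) (C.ρ' t⁻¹) t ht C.a C.b
      (C.trans t ht) (C.transV t ht) idx jdx i
  have h0 : (C.ρ 0).symm (φ (C.f 0) (fun j => C.τ 0 (Pi.single (idx j) 1))
      (fun r => (LinearMap.proj (jdx r)).comp ((C.τ 0).symm).toLinearMap)) = 0 :=
    funext fun i => hFzero i 0
  exact (LinearEquiv.map_eq_zero_iff _).mp h0
private lemma expand_zero {U W : Type*} [AddCommGroup U] [Module ℂ U] [AddCommGroup W]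
    [Module ℂ W] {m k ℓ : ℕ}
    (T : MultilinearMap ℂ (fun _ : Fin k => U)
      (MultilinearMap ℂ (fun _ : Fin ℓ => Module.Dual ℂ U) W))
    (τ0 : (Fin m → ℂ) ≃ₗ[ℂ] U) (v : Fin k → U) (ξ : Fin ℓ → Module.Dual ℂ U)
    (hterm : ∀ (idx : Fin k → Fin m) (jdx : Fin ℓ → Fin m),
      T (fun j => τ0 (Pi.single (idx j) 1))
        (fun r => (LinearMap.proj (jdx r)).comp τ0.symm.toLinearMap) = 0 ∨
      ((∏ j, τ0.symm (v j) (idx j)) * ∏ r, ξ r (τ0 (Pi.single (jdx r) 1))) = 0) :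
    T v ξ = 0 := by
  classical
  set w : Fin m → U := fun p => τ0 (Pi.single p 1) with hw
  set δ : Fin m → Module.Dual ℂ U := fun p =>
    (LinearMap.proj p).comp τ0.symm.toLinearMap with hδ
  have hexp : ∀ vv : U, vv = ∑ p, τ0.symm vv p • w p := by
    intro vv
    conv_lhs => rw [← τ0.apply_symm_apply vv,
      show (τ0.symm vv : Fin m → ℂ) = ∑ p, Pi.single p (τ0.symm vv p) from
        (Finset.univ_sum_single _).symm]
    rw [map_sum]
    refine Finset.sum_congr rfl fun p _ => ?_
    rw [show (Pi.single p (τ0.symm vv p) : Fin m → ℂ) = τ0.symm vv p • (Pi.single p 1 : Fin m → ℂ) from by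
      funext q
      by_cases hq : q = p
      · subst hq; simp
      · simp [Pi.single_apply, hq], map_smul]
  have hexpξ : ∀ g : Module.Dual ℂ U, g = ∑ p, g (w p) • δ p := by
    intro g
    apply LinearMap.ext
    intro vv
    conv_lhs => rw [hexp vv]
    rw [map_sum, LinearMap.sum_apply]
    refine Finset.sum_congr rfl fun p _ => ?_
    rw [map_smul, LinearMap.smul_apply, smul_eq_mul, smul_eq_mul, hδ]
    simp only [LinearMap.coe_comp, LinearMap.coe_proj, Function.comp_apply,
      LinearEquiv.coe_coe, Function.eval]
    exact mul_comm _ _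
  have h1 : T v ξ = ∑ idx : Fin k → Fin m,
      (∏ j, τ0.symm (v j) (idx j)) • T (fun j => w (idx j)) ξ := by
    conv_lhs => rw [show v = fun j => ∑ p, τ0.symm (v j) p • w p from
      funext fun j => hexp (v j)]
    rw [MultilinearMap.map_sum, MultilinearMap.sum_apply]
    refine Finset.sum_congr rfl fun idx _ => ?_
    rw [MultilinearMap.map_smul_univ, MultilinearMap.smul_apply]
  have h2 : ∀ idx : Fin k → Fin m, T (fun j => w (idx j)) ξ
      = ∑ jdx : Fin ℓ → Fin m,
        (∏ r, ξ r (w (jdx r))) • T (fun j => w (idx j)) (fun r => δ (jdx r)) := by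
    intro idx
    conv_lhs => rw [show ξ = fun r => ∑ p, ξ r (w p) • δ p from
      funext fun r => hexpξ (ξ r)]
    rw [MultilinearMap.map_sum]
    refine Finset.sum_congr rfl fun jdx _ => ?_
    rw [MultilinearMap.map_smul_univ]
  rw [h1]
  refine Finset.sum_eq_zero fun idx _ => ?_
  rw [h2 idx, Finset.smul_sum]
  refine Finset.sum_eq_zero fun jdx _ => ?_
  rcases hterm idx jdx with h | h
  · rw [hw, hδ] at *
    rw [h, smul_zero, smul_zero]
  · rcases mul_eq_zero.mp h with h' | h'
    · rw [smul_comm, h', zero_smul, smul_zero]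
    · rw [h', zero_smul, smul_zero]

private lemma transport_vanish {y z : M} (h : y = z)
    (φ : ∀ y : M, MultilinearMap ℂ (fun _ : Fin k => 𝒰 y)
      (MultilinearMap ℂ (fun _ : Fin ℓ => Module.Dual ℂ (𝒰 y)) (𝒱 y)))
    (τ0 : (Fin m → ℂ) ≃ₗ[ℂ] 𝒰 y) :
    ∃ τ1 : (Fin m → ℂ) ≃ₗ[ℂ] 𝒰 z,
      (∀ c, τ1 c = cast (congrArg 𝒰 h) (τ0 c)) ∧
      ∀ (idx : Fin k → Fin m) (jdx : Fin ℓ → Fin m),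
        φ y (fun j => τ0 (Pi.single (idx j) 1))
          (fun r => (LinearMap.proj (jdx r)).comp τ0.symm.toLinearMap) = 0 →
        φ z (fun j => τ1 (Pi.single (idx j) 1))
          (fun r => (LinearMap.proj (jdx r)).comp τ1.symm.toLinearMap) = 0 := by
  subst h
  exact ⟨τ0, fun c => rfl, fun idx jdx hv => hv⟩

private lemma cast_smul_cast {y z : M} (h : y = z) (c : ℂ) (vv : 𝒰 z) :
    cast (congrArg 𝒰 h) (c • cast (congrArg 𝒰 h).symm vv) = c • vv := by
  subst h; rfl

private lemma stepP {hm : 0 < m} (hℓk : ℓ < k) {x : M} {u : 𝒰 x}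
    (φ : ∀ y : M, MultilinearMap ℂ (fun _ : Fin k => 𝒰 y)
      (MultilinearMap ℂ (fun _ : Fin ℓ => Module.Dual ℂ (𝒰 y)) (𝒱 y)))
    (C : SAFCurve M 𝒰 𝒱 m d hm x u) (hH : HolAlong hm φ C) :
    (∀ (j : Fin k) (v : Fin k → 𝒰 x) (ξ : Fin ℓ → Module.Dual ℂ (𝒰 x)),
        v j = u → (∀ r, ξ r u = 0) → φ x v ξ = 0)
    ∧ (∀ (v : Fin k → 𝒰 x) (ξ : Fin ℓ → Module.Dual ℂ (𝒰 x)),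
        (∀ j, v j = u) → φ x v ξ = 0) := by
  classical
  obtain ⟨cc, hcc, hfib⟩ := C.fiber
  obtain ⟨τ1, hτ1, htrans⟩ := transport_vanish C.basept φ (C.τ 0)
  set z0 : Fin m := ⟨0, hm⟩ with hz0
  have hfib1 : τ1 (Pi.single z0 1) = cc • u := by
    rw [hτ1, hfib, cast_smul_cast C.basept]
  have huc : u = cc⁻¹ • τ1 (Pi.single z0 1) := by
    rw [hfib1, smul_smul, inv_mul_cancel₀ hcc, one_smul]
  have hu_coord : ∀ p : Fin m, τ1.symm u p = if p = z0 then cc⁻¹ else 0 := by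
    intro p
    rw [huc, map_smul, LinearEquiv.symm_apply_apply]
    simp [Pi.single_apply]
  have hQ : ∀ (idx : Fin k → Fin m) (jdx : Fin ℓ → Fin m),
      (Finset.univ.filter fun r => ((jdx r : ℕ) = 0)).card
        < (Finset.univ.filter fun j => ((idx j : ℕ) = 0)).card →
      φ x (fun j => τ1 (Pi.single (idx j) 1))
        (fun r => (LinearMap.proj (jdx r)).comp τ1.symm.toLinearMap) = 0 := by
    intro idx jdx hcond
    exact htrans idx jdx (stepQ φ C hH idx jdx hcond)
  constructor
  · intro j v ξ hvj hξ
    apply expand_zero _ τ1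
    intro idx jdx
    by_cases hco : ((∏ j', τ1.symm (v j') (idx j')) * ∏ r, ξ r (τ1 (Pi.single (jdx r) 1))) = 0
    · exact Or.inr hco
    refine Or.inl (hQ idx jdx ?_)
    have hA : ∀ j', τ1.symm (v j') (idx j') ≠ 0 := by
      intro j'
      have h1 : (∏ j', τ1.symm (v j') (idx j')) ≠ 0 := fun h => hco (by rw [h, zero_mul])
      exact Finset.prod_ne_zero_iff.mp h1 j' (Finset.mem_univ _)
    have hB : ∀ r, ξ r (τ1 (Pi.single (jdx r) 1)) ≠ 0 := by
      intro r
      have h1 : (∏ r, ξ r (τ1 (Pi.single (jdx r) 1))) ≠ 0 := fun h => hco (by rw [h, mul_zero])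
      exact Finset.prod_ne_zero_iff.mp h1 r (Finset.mem_univ _)
    have hj0 : (idx j : ℕ) = 0 := by
      have h3 := hA j
      rw [hvj] at h3
      by_contra hne
      have hne' : idx j ≠ z0 := fun hh => hne (by rw [hh])
      rw [hu_coord, if_neg hne'] at h3
      exact h3 rfl
    have hjdx : ∀ r, ¬ ((jdx r : ℕ) = 0) := by
      intro r hr
      have h4 : jdx r = z0 := Fin.ext hr
      have h5 := hB r
      rw [h4, hfib1, map_smul, smul_eq_mul, hξ r, mul_zero] at h5
      exact h5 rfl
    have hcard0 : (Finset.univ.filter fun r => ((jdx r : ℕ) = 0)) = ∅ :=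
      Finset.filter_eq_empty_iff.mpr (by intro r _; exact hjdx r)
    rw [hcard0]
    simp only [Finset.card_empty]
    refine Finset.card_pos.mpr ⟨j, ?_⟩
    simp [hj0]
  · intro v ξ hv
    apply expand_zero _ τ1
    intro idx jdx
    by_cases hco : ((∏ j', τ1.symm (v j') (idx j')) * ∏ r, ξ r (τ1 (Pi.single (jdx r) 1))) = 0
    · exact Or.inr hco
    refine Or.inl (hQ idx jdx ?_)
    have hA : ∀ j', τ1.symm (v j') (idx j') ≠ 0 := by
      intro j'
      have h1 : (∏ j', τ1.symm (v j') (idx j')) ≠ 0 := fun h => hco (by rw [h, zero_mul])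
      exact Finset.prod_ne_zero_iff.mp h1 j' (Finset.mem_univ _)
    have hidx : ∀ j', (idx j' : ℕ) = 0 := by
      intro j'
      have h3 := hA j'
      rw [hv j'] at h3
      by_contra hne
      have hne' : idx j' ≠ z0 := fun hh => hne (by rw [hh])
      rw [hu_coord, if_neg hne'] at h3
      exact h3 rfl
    have hfull : (Finset.univ.filter fun j' => ((idx j' : ℕ) = 0)) = Finset.univ := by
      apply Finset.filter_true_of_mem
      intro j' _
      exact hidx j'
    rw [hfull, Finset.card_univ, Fintype.card_fin]
    exact lt_of_le_of_lt (le_trans (Finset.card_filter_le _ _) (by simp)) hℓk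

private lemma poly_fun_zero (f : ℂ → ℂ) (P : Polynomial ℂ) (hP : ∀ c, f c = P.eval c)
    (h0 : ∀ᶠ c in nhds (0 : ℂ), f c = 0) : ∀ c, f c = 0 := by
  have hinf : {c : ℂ | f c = 0}.Infinite := infinite_of_mem_nhds (0 : ℂ) h0
  have hPz : P = 0 := by
    apply Polynomial.eq_zero_of_infinite_isRoot
    apply hinf.mono
    intro c hc
    simp only [Set.mem_setOf_eq, Polynomial.IsRoot.def]
    rw [← hP]
    exact hc
  intro c
  rw [hP, hPz]
  simp

private lemma polyShape {U W : Type*} [AddCommGroup U] [Module ℂ U] [AddCommGroup W]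
    [Module ℂ W] {k ℓ : ℕ}
    (T : MultilinearMap ℂ (fun _ : Fin k => U)
      (MultilinearMap ℂ (fun _ : Fin ℓ => Module.Dual ℂ U) W))
    (g : W →ₗ[ℂ] ℂ) (p q : Fin k → U) (α β : Fin ℓ → Module.Dual ℂ U) :
    ∃ P : Polynomial ℂ, ∀ c : ℂ,
      g (T (fun j => p j + c • q j) (fun r => α r + c • β r)) = P.eval c := by
  classical
  refine ⟨∑ s : Finset (Fin k), ∑ t : Finset (Fin ℓ),
    Polynomial.C (g (T (s.piecewise q p) (t.piecewise β α)))
      * Polynomial.X ^ (s.card + t.card), ?_⟩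
  intro c
  have hV : T (fun j => p j + c • q j)
      = ∑ s : Finset (Fin k), (c ^ s.card) • T (s.piecewise q p) := by
    have e : (fun j => p j + c • q j) = (fun j => c • q j) + p := by
      funext j; simp [add_comm]
    rw [e, MultilinearMap.map_add_univ]
    refine Finset.sum_congr rfl fun s _ => ?_
    have e2 : s.piecewise (fun j => c • q j) p
        = fun j => (if j ∈ s then c else 1) • s.piecewise q p j := by
      funext j
      by_cases hj : j ∈ s
      · simp [Finset.piecewise_eq_of_mem _ _ _ hj, hj]
      · simp [Finset.piecewise_eq_of_notMem _ _ _ hj, hj]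
    rw [e2, MultilinearMap.map_smul_univ]
    congr 1
    rw [Finset.prod_ite_mem, Finset.univ_inter, Finset.prod_const]
  have hXi : ∀ s : Finset (Fin k),
      T (s.piecewise q p) (fun r => α r + c • β r)
      = ∑ t : Finset (Fin ℓ), (c ^ t.card) • T (s.piecewise q p) (t.piecewise β α) := by
    intro s
    have e : (fun r => α r + c • β r) = (fun r => c • β r) + α := by
      funext r; simp [add_comm]
    rw [e, MultilinearMap.map_add_univ]
    refine Finset.sum_congr rfl fun t _ => ?_
    have e2 : t.piecewise (fun r => c • β r) α
        = fun r => (if r ∈ t then c else 1) • t.piecewise β α r := by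
      funext r
      by_cases hr : r ∈ t
      · simp [Finset.piecewise_eq_of_mem _ _ _ hr, hr]
      · simp [Finset.piecewise_eq_of_notMem _ _ _ hr, hr]
    rw [e2, MultilinearMap.map_smul_univ]
    congr 1
    rw [Finset.prod_ite_mem, Finset.univ_inter, Finset.prod_const]
  rw [hV, MultilinearMap.sum_apply, map_sum]
  rw [Polynomial.eval_finset_sum]
  refine Finset.sum_congr rfl fun s _ => ?_
  rw [MultilinearMap.smul_apply, map_smul, smul_eq_mul, hXi s, map_sum,
    Polynomial.eval_finset_sum, Finset.mul_sum]
  refine Finset.sum_congr rfl fun t _ => ?_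
  rw [map_smul, smul_eq_mul]
  simp [pow_add]
  ring

private lemma sym_diag_zero {D W : Type*} [AddCommGroup D] [Module ℂ D] [AddCommGroup W]
    [Module ℂ W] {n : ℕ}
    (f : MultilinearMap ℂ (fun _ : Fin n => D) W)
    (hsep : ∀ w : W, (∀ g : W →ₗ[ℂ] ℂ, g w = 0) → w = 0)
    (hsym : ∀ (σ : Equiv.Perm (Fin n)) (ξ : Fin n → D), f ξ = f (ξ ∘ σ))
    (hdiag : ∀ η : D, f (fun _ => η) = 0) : ∀ ξ, f ξ = 0 := by
  classical
  suffices H : ∀ q : ℕ, ∀ ξ : Fin n → D, ∀ η : D,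
      (∀ r : Fin n, q ≤ (r : ℕ) → ξ r = η) → f ξ = 0 by
    intro ξ
    exact H n ξ 0 (fun r hr => absurd r.2 (by omega))
  intro q
  induction q with
  | zero =>
    intro ξ η hc
    have : ξ = fun _ => η := funext fun r => hc r (Nat.zero_le _)
    rw [this]
    exact hdiag η
  | succ q ih =>
    intro ξ η hc
    by_cases hq : n ≤ q
    · exact ih ξ η (fun r hr => absurd r.2 (by omega))
    push_neg at hq
    set qf : Fin n := ⟨q, hq⟩ with hqf
    set η' := ξ qf - η with hη'
    set base : Fin n → D := fun r => if (r : ℕ) < q then ξ r else η with hbase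
    set dir : Fin n → D := fun r => if (r : ℕ) < q then 0 else η' with hdir
    have hzero : ∀ c : ℂ, f (fun r => base r + c • dir r) = 0 := by
      intro c
      apply ih _ (η + c • η')
      intro r hr
      have hrq : ¬ ((r : ℕ) < q) := by omega
      simp only [hbase, hdir, if_neg hrq]
    have hexp : ∀ c : ℂ, f (fun r => base r + c • dir r)
        = ∑ t : Finset (Fin n), (c ^ t.card) • f (t.piecewise dir base) := by
      intro c
      have e : (fun r => base r + c • dir r) = (fun r => c • dir r) + base := by
        funext r; simp [add_comm]
      rw [e, MultilinearMap.map_add_univ]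
      refine Finset.sum_congr rfl fun t _ => ?_
      have e2 : t.piecewise (fun r => c • dir r) base
          = fun r => (if r ∈ t then c else 1) • t.piecewise dir base r := by
        funext r
        by_cases hr : r ∈ t
        · simp [Finset.piecewise_eq_of_mem _ _ _ hr, hr]
        · simp [Finset.piecewise_eq_of_notMem _ _ _ hr, hr]
      rw [e2, MultilinearMap.map_smul_univ]
      congr 1
      rw [Finset.prod_ite_mem, Finset.univ_inter, Finset.prod_const]
    have hkey : f (Function.update base qf η') = 0 := by
      apply hsep
      intro g
      set P : Polynomial ℂ := ∑ t : Finset (Fin n),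
        Polynomial.C (g (f (t.piecewise dir base))) * Polynomial.X ^ t.card with hP
      have hPz : P = 0 := by
        apply Polynomial.funext
        intro c
        rw [Polynomial.eval_zero, hP, Polynomial.eval_finset_sum]
        have he : ∀ t : Finset (Fin n),
            Polynomial.eval c (Polynomial.C (g (f (t.piecewise dir base)))
              * Polynomial.X ^ t.card)
            = (c ^ t.card) * g (f (t.piecewise dir base)) := by
          intro t
          rw [Polynomial.eval_mul, Polynomial.eval_C, Polynomial.eval_pow, Polynomial.eval_X,
            mul_comm]
        rw [Finset.sum_congr rfl fun t _ => he t]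
        have h1 : (∑ t : Finset (Fin n), (c ^ t.card) * g (f (t.piecewise dir base)))
            = g (f (fun r => base r + c • dir r)) := by
          rw [hexp c, map_sum]
          exact Finset.sum_congr rfl fun t _ => by rw [map_smul, smul_eq_mul]
        rw [h1, hzero c, map_zero]
      have hco := congrArg (fun Q : Polynomial ℂ => Q.coeff 1) hPz
      simp only [hP, Polynomial.finset_sum_coeff, Polynomial.coeff_zero,
        Polynomial.coeff_C_mul, Polynomial.coeff_X_pow] at hco
      have hco2 : ∑ t ∈ Finset.univ.filter (fun t : Finset (Fin n) => 1 = t.card),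
          g (f (t.piecewise dir base)) = 0 := by
        rw [Finset.sum_filter]
        calc (∑ t : Finset (Fin n), if 1 = t.card then g (f (t.piecewise dir base)) else 0)
            = ∑ t : Finset (Fin n),
              g (f (t.piecewise dir base)) * (if 1 = t.card then 1 else 0) := by
              refine Finset.sum_congr rfl fun t _ => ?_
              by_cases h1 : (1 : ℕ) = t.card
              · rw [if_pos h1, if_pos h1, mul_one]
              · rw [if_neg h1, if_neg h1, mul_zero]
          _ = 0 := hco
      have himg : Finset.univ.filter (fun t : Finset (Fin n) => 1 = t.card)
          = Finset.univ.image (fun r : Fin n => ({r} : Finset (Fin n))) := by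
        ext t
        constructor
        · intro ht
          simp only [Finset.mem_filter] at ht
          obtain ⟨a, ha⟩ := Finset.card_eq_one.mp ht.2.symm
          exact Finset.mem_image.mpr ⟨a, Finset.mem_univ a, ha.symm⟩
        · intro ht
          obtain ⟨r, -, hr⟩ := Finset.mem_image.mp ht
          rw [← hr]
          simp
      rw [himg, Finset.sum_image (fun r _ r' _ h => Finset.singleton_injective h)] at hco2
      have hterm : ∀ r : Fin n, g (f (({r} : Finset (Fin n)).piecewise dir base))
          = if (r : ℕ) < q then 0 else g (f (Function.update base qf η')) := by
        intro r
        by_cases hr : (r : ℕ) < q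
        · rw [if_pos hr]
          have h0 : (({r} : Finset (Fin n)).piecewise dir base) r = 0 := by
            rw [Finset.piecewise_eq_of_mem _ _ _ (Finset.mem_singleton_self r)]
            simp [hdir, hr]
          rw [f.map_coord_zero r h0, map_zero]
        · rw [if_neg hr]
          have hcomp : (({r} : Finset (Fin n)).piecewise dir base)
              = (Function.update base qf η') ∘ (Equiv.swap qf r) := by
            funext s
            by_cases hs : s = r
            · subst hs
              rw [Finset.piecewise_eq_of_mem _ _ _ (Finset.mem_singleton_self s)]
              simp only [Function.comp_apply]
              rw [Equiv.swap_apply_right, Function.update_self]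
              simp only [hdir]
              rw [if_neg hr]
            · rw [Finset.piecewise_eq_of_notMem _ _ _ (by simp [hs])]
              by_cases hs2 : s = qf
              · rw [hs2]
                have hrqf : r ≠ qf := fun hh => hs (by rw [hs2, hh])
                simp only [Function.comp_apply]
                rw [Equiv.swap_apply_left, Function.update_of_ne hrqf]
                have hq1 : ¬ ((qf : ℕ) < q) := by simp [hqf]
                simp only [hbase]
                rw [if_neg hq1, if_neg hr]
              · simp only [Function.comp_apply]
                rw [Equiv.swap_apply_of_ne_of_ne hs2 hs, Function.update_of_ne hs2]
          rw [hcomp, ← hsym (Equiv.swap qf r) (Function.update base qf η')]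
      rw [Finset.sum_congr rfl fun r _ => hterm r] at hco2
      rw [Finset.sum_ite, Finset.sum_const_zero, zero_add, Finset.sum_const] at hco2
      have hmem : qf ∈ Finset.univ.filter (fun r : Fin n => ¬ ((r : ℕ) < q)) := by
        simp [hqf]
      have hcard : ((Finset.univ.filter fun r : Fin n => ¬ ((r : ℕ) < q)).card : ℂ) ≠ 0 := by
        rw [Nat.cast_ne_zero]
        exact Finset.card_ne_zero_of_mem hmem
      rw [nsmul_eq_mul] at hco2
      exact (mul_eq_zero.mp hco2).resolve_left hcard
    have hupd : Function.update ξ qf η' = Function.update base qf η' := by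
      funext s
      by_cases hs : s = qf
      · rw [hs, Function.update_self, Function.update_self]
      · rw [Function.update_of_ne hs, Function.update_of_ne hs]
        by_cases hlt : (s : ℕ) < q
        · simp [hbase, hlt]
        · have hsq : (s : ℕ) ≠ q := fun hh => hs (Fin.ext (by simp [hqf, hh]))
          rw [hc s (by omega)]
          simp [hbase, hlt]
    have h2 : f (Function.update ξ qf η) = 0 := by
      apply ih _ η
      intro r hr
      by_cases hrq : r = qf
      · rw [hrq, Function.update_self]
      · rw [Function.update_of_ne hrq]
        refine hc r ?_
        have : (r : ℕ) ≠ q := fun hh => hrq (Fin.ext (by simp [hqf, hh]))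
        omega
    have h3 : f ξ = f (Function.update ξ qf η') + f (Function.update ξ qf η) := by
      have hma := f.map_update_add ξ qf η' η
      rw [show η' + η = ξ qf from by rw [hη']; abel] at hma
      rw [Function.update_eq_self] at hma
      exact hma
    rw [h3, hupd, hkey, h2, add_zero]
/- STATEMENT 17: If `(M, 𝒰)` satisfies the SAF-condition (witnessed by `M'`,
`{𝒰ₓᵒ}`, and curves `f_u` with `f_u*𝒰 ≅ ℒ_u ⊕ 𝒪^{m-1}`, `ℒ_u` ample with
fiber `ℂu` at the base point) and `𝒱` is of nonpositive type, then every
(holomorphic) vector bundle homomorphism `φ : ⊗^k 𝒰 → 𝒱 ⊗ Sym^ℓ 𝒰` with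
`0 ≤ ℓ < k` is zero. -/
theorem hom_to_nonpositive_tensor_sym_vanishes
    [∀ x, FiniteDimensional ℂ (𝒰 x)] [∀ x, FiniteDimensional ℂ (𝒱 x)]
    (hm : 0 < m) (hm2 : 2 ≤ m) (hℓk : ℓ < k)
    (hrkU : ∀ x, finrank ℂ (𝒰 x) = m) (hrkV : ∀ x, finrank ℂ (𝒱 x) = d)
    (M' : Set M) (hM' : M'.Nonempty)
    (Uo : ∀ x : M, Set (𝒰 x))
    (hUo : ∀ x ∈ M', (Uo x).Nonempty ∧ (0 : 𝒰 x) ∉ Uo x)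
    (hUoOpen : ∀ x ∈ M', ∀ u ∈ Uo x, ∀ w : 𝒰 x,
      ∀ᶠ c : ℂ in nhds 0, u + c • w ∈ Uo x)
    (φ : ∀ y : M, MultilinearMap ℂ (fun _ : Fin k => 𝒰 y)
      (MultilinearMap ℂ (fun _ : Fin ℓ => Module.Dual ℂ (𝒰 y)) (𝒱 y)))
    -- φ takes values in 𝒱 ⊗ Sym^ℓ 𝒰 (symmetric multilinear maps on 𝒰*) :
    (hsym : ∀ (y : M) (v : Fin k → 𝒰 y) (σp : Equiv.Perm (Fin ℓ))
      (fs : Fin ℓ → Module.Dual ℂ (𝒰 y)), φ y v fs = φ y v (fs ∘ σp))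
    -- SAF-condition for (M, 𝒰), nonpositivity of 𝒱, and holomorphy of φ
    -- along the SAF curves :
    (hSAF : ∀ x ∈ M', ∀ u ∈ Uo x,
      ∃ C : SAFCurve M 𝒰 𝒱 m d hm x u, HolAlong hm φ C) :
    ∀ x ∈ M', φ x = 0 := by

  intro x hx
  classical
  have hP : ∀ u ∈ Uo x,
      (∀ (j : Fin k) (v : Fin k → 𝒰 x) (ξ : Fin ℓ → Module.Dual ℂ (𝒰 x)),
        v j = u → (∀ r, ξ r u = 0) → φ x v ξ = 0)
      ∧ (∀ (v : Fin k → 𝒰 x) (ξ : Fin ℓ → Module.Dual ℂ (𝒰 x)),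
        (∀ j, v j = u) → φ x v ξ = 0) := by
    intro u hu
    obtain ⟨C, hC⟩ := hSAF x hx u hu
    exact stepP hℓk φ C hC
  obtain ⟨u₀, hu₀⟩ := (hUo x hx).1
  have hsep : ∀ w : 𝒱 x, (∀ g : Module.Dual ℂ (𝒱 x), g w = 0) → w = 0 := fun w h =>
    (Module.forall_dual_apply_eq_zero_iff ℂ w).mp h
  -- E2' : full diagonal vanishing in the vector slots, for every u
  have hE2 : ∀ (u : 𝒰 x) (ξ : Fin ℓ → Module.Dual ℂ (𝒰 x)), φ x (fun _ => u) ξ = 0 := by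
    intro u ξ
    apply hsep
    intro g
    obtain ⟨P, hPe⟩ := polyShape (φ x) g (fun _ => u₀) (fun _ => (u - u₀)) ξ 0
    have hPe' : ∀ c : ℂ, g (φ x (fun _ => u₀ + c • (u - u₀)) ξ) = P.eval c := by
      intro c
      have e : (fun r : Fin ℓ => ξ r + c • (0 : Fin ℓ → Module.Dual ℂ (𝒰 x)) r) = ξ :=
        funext fun r => by simp
      rw [← hPe c, e]
    have hvanish : ∀ᶠ c in nhds (0 : ℂ), g (φ x (fun _ => u₀ + c • (u - u₀)) ξ) = 0 := by
      filter_upwards [hUoOpen x hx u₀ hu₀ (u - u₀)] with c hc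
      rw [(hP _ hc).2 (fun _ => u₀ + c • (u - u₀)) ξ (fun _ => rfl), map_zero]
    have h1 := poly_fun_zero _ P hPe' hvanish 1
    rw [show (fun _ : Fin k => u₀ + (1 : ℂ) • (u - u₀)) = (fun _ : Fin k => u) from
      funext fun _ => by simp] at h1
    exact h1
  -- E1' : vanishing when one slot carries u and the diagonal dual argument kills u
  have hE1 : ∀ (u : 𝒰 x), u ≠ 0 → ∀ (ξ : Module.Dual ℂ (𝒰 x)), ξ u = 0 →
      ∀ (j : Fin k) (v : Fin k → 𝒰 x), v j = u → φ x v (fun _ => ξ) = 0 := by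
    intro u hune ξ hξu j v hvj
    obtain ⟨χ0, hχ0⟩ : ∃ χ0 : Module.Dual ℂ (𝒰 x), χ0 u ≠ 0 := by
      by_contra hcon
      push_neg at hcon
      exact hune ((Module.forall_dual_apply_eq_zero_iff ℂ u).mp hcon)
    set χ : Module.Dual ℂ (𝒰 x) := (χ0 u)⁻¹ • χ0 with hχ
    have hχu : χ u = 1 := by
      simp only [hχ, LinearMap.smul_apply, smul_eq_mul]
      exact inv_mul_cancel₀ hχ0
    apply hsep
    intro g
    set w' : 𝒰 x := u - u₀ with hw'
    set α : Fin ℓ → Module.Dual ℂ (𝒰 x) := fun _ => χ u₀ • ξ - ξ u₀ • χ with hα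
    set β : Fin ℓ → Module.Dual ℂ (𝒰 x) := fun _ => χ w' • ξ - ξ w' • χ with hβ
    set p : Fin k → 𝒰 x := Function.update v j u₀ with hp
    set q : Fin k → 𝒰 x := fun j' => if j' = j then w' else 0 with hq2
    obtain ⟨P, hPe⟩ := polyShape (φ x) g p q α β
    have hvanish : ∀ᶠ c in nhds (0 : ℂ),
        g (φ x (fun j' => p j' + c • q j') (fun r => α r + c • β r)) = 0 := by
      filter_upwards [hUoOpen x hx u₀ hu₀ w'] with c hc
      have hvj' : (fun j' => p j' + c • q j') j = u₀ + c • w' := by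
        simp [hp, hq2]
      have hξc : ∀ r : Fin ℓ, (α r + c • β r) (u₀ + c • w') = 0 := by
        intro r
        simp only [hα, hβ, LinearMap.add_apply, LinearMap.smul_apply, LinearMap.sub_apply,
          smul_eq_mul, map_add, map_smul]
        ring
      rw [(hP _ hc).1 j _ _ hvj' hξc, map_zero]
    have h1 := poly_fun_zero _ P hPe hvanish 1
    have e1 : (fun j' => p j' + (1 : ℂ) • q j') = v := by
      funext j'
      by_cases hj' : j' = j
      · rw [hj']
        simp only [hp, hq2, if_pos rfl, Function.update_self, one_smul, hw', hvj]
        abel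
      · simp [hp, hq2, hj', Function.update_of_ne hj']
    have e2 : (fun r : Fin ℓ => α r + (1 : ℂ) • β r) = fun _ : Fin ℓ => ξ := by
      funext r
      simp only [hα, hβ, one_smul]
      have hχsum : χ u₀ + χ w' = 1 := by
        rw [hw', ← map_add, add_sub_cancel, hχu]
      have hξsum : ξ u₀ + ξ w' = 0 := by
        rw [hw', ← map_add, add_sub_cancel, hξu]
      rw [sub_add_sub_comm, ← add_smul, ← add_smul, hχsum, hξsum, one_smul, zero_smul, sub_zero]
    rw [e1, e2] at h1
    exact h1
  -- diagonal vanishing in the dual slots, for every vector tuple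
  have hdiagAll : ∀ (v : Fin k → 𝒰 x) (ξ : Module.Dual ℂ (𝒰 x)), ξ ≠ 0 →
      φ x v (fun _ => ξ) = 0 := by
    intro v ξ hξ
    obtain ⟨u1, hu1⟩ : ∃ u1 : 𝒰 x, ξ u1 ≠ 0 := by
      by_contra hcon
      push_neg at hcon
      exact hξ (by ext y; simp [hcon y])
    set us : 𝒰 x := (ξ u1)⁻¹ • u1 with hus
    have hξus : ξ us = 1 := by
      simp only [hus, map_smul, smul_eq_mul]
      exact inv_mul_cancel₀ hu1
    have hsplit : v = (fun j => v j - ξ (v j) • us) + (fun j => ξ (v j) • us) := by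
      funext j; simp
    calc φ x v (fun _ => ξ)
        = ∑ s : Finset (Fin k), φ x (s.piecewise (fun j => v j - ξ (v j) • us)
            (fun j => ξ (v j) • us)) (fun _ => ξ) := by
          conv_lhs => rw [hsplit]
          rw [MultilinearMap.map_add_univ, MultilinearMap.sum_apply]
      _ = 0 := by
          apply Finset.sum_eq_zero
          intro s _
          by_cases hse : s = ∅
          · rw [hse]
            rw [show (∅ : Finset (Fin k)).piecewise (fun j => v j - ξ (v j) • us)
                (fun j => ξ (v j) • us) = fun j => ξ (v j) • us from
              funext fun j => by simp [Finset.piecewise_empty]]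
            rw [show (fun j => ξ (v j) • us) = fun j => ξ (v j) • (fun _ : Fin k => us) j from
              rfl]
            rw [MultilinearMap.map_smul_univ, MultilinearMap.smul_apply, hE2 us, smul_zero]
          · obtain ⟨j, hj⟩ := Finset.nonempty_iff_ne_empty.mpr hse
            have hval : (s.piecewise (fun j => v j - ξ (v j) • us) (fun j => ξ (v j) • us)) j
                = v j - ξ (v j) • us := Finset.piecewise_eq_of_mem _ _ _ hj
            by_cases hz : v j - ξ (v j) • us = 0
            · rw [MultilinearMap.map_coord_zero _ j (by rw [hval, hz]),
                MultilinearMap.zero_apply]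
            · have hξz : ξ (v j - ξ (v j) • us) = 0 := by
                rw [map_sub, map_smul, smul_eq_mul, hξus, mul_one, sub_self]
              exact hE1 _ hz ξ hξz j _ hval
  -- conclude via polarization in the dual slots
  apply MultilinearMap.ext
  intro v
  have hdiag : ∀ η : Module.Dual ℂ (𝒰 x), φ x v (fun _ => η) = 0 := by
    intro η
    by_cases hη : η = 0
    · rcases Nat.eq_zero_or_pos ℓ with hl | hl
      · obtain ⟨ξ', hξ'⟩ : ∃ ξ' : Module.Dual ℂ (𝒰 x), ξ' ≠ 0 := by
          have hnt : Nontrivial (𝒰 x) := Module.nontrivial_of_finrank_pos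
            (by rw [hrkU x]; omega)
          obtain ⟨u1, hu1⟩ := exists_ne (0 : 𝒰 x)
          obtain ⟨χ0, hχ0⟩ : ∃ χ0 : Module.Dual ℂ (𝒰 x), χ0 u1 ≠ 0 := by
            by_contra hcon
            push_neg at hcon
            exact hu1 ((Module.forall_dual_apply_eq_zero_iff ℂ u1).mp hcon)
          exact ⟨χ0, fun h => hχ0 (by rw [h]; rfl)⟩
        have hzz := hdiagAll v ξ' hξ'
        rw [show (fun _ : Fin ℓ => η) = (fun _ : Fin ℓ => ξ') from
          funext fun r => absurd r.2 (by omega)]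
        exact hzz
      · rw [hη]
        exact MultilinearMap.map_coord_zero _ (⟨0, hl⟩ : Fin ℓ) rfl
    · exact hdiagAll v η hη
  have hz := sym_diag_zero (φ x v) hsep (fun σ ξ => hsym x v σ ξ) hdiag
  apply MultilinearMap.ext
  intro ξt
  rw [hz ξt]
  simp
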